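/- Let F : ℝ^n × ℝ^m × ℝ^m × ℝ^l → ℝ^{m+l} be differentiable at u = (x,y,w,z), where y ≥ 0 and w ≥ 0 componentwise, let σ ∈ [0,1), and let d = (dx,dy,dw,dz) satisfy DF(u)[d] = −F(u) and w_j dy_j + y_j dw_j = −w_j y_j + σ (yᵀw)/m for every j = 1,…,m. If F(u) ≠ 0 or yᵀw > 0, then the derivative of φ(x,y,w,z) := ‖F(x,y,w,z)‖² + yᵀw at u in the direction d is strictly negative, i.e. d is a descent direction for φ at u. -/

import Mathlib

/-- Under the hypotheses of Statement 2, with additionally `y ≥ 0`,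
`w ≥ 0` componentwise and `σ ∈ [0,1)`: if `F(u) ≠ 0` or `yᵀw > 0`, then the derivative
of `φ(x,y,w,z) = ‖F(x,y,w,z)‖² + yᵀw` at `u` in the direction `d` is strictly negative,
i.e. `d` is a descent direction for `φ` at `u`. -/
theorem constraintViolation_descentDirection
    (n m l : ℕ)
    (F : (Fin n → ℝ) × (Fin m → ℝ) × (Fin m → ℝ) × (Fin l → ℝ) →
      EuclideanSpace ℝ (Fin (m + l)))
    (u : (Fin n → ℝ) × (Fin m → ℝ) × (Fin m → ℝ) × (Fin l → ℝ))
    (F' : ((Fin n → ℝ) × (Fin m → ℝ) × (Fin m → ℝ) × (Fin l → ℝ)) →L[ℝ]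
      EuclideanSpace ℝ (Fin (m + l)))
    (hF : HasFDerivAt F F' u)
    (hy : ∀ i, 0 ≤ u.2.1 i) (hw : ∀ i, 0 ≤ u.2.2.1 i)
    (σ : ℝ) (hσ0 : 0 ≤ σ) (hσ1 : σ < 1)
    (d : (Fin n → ℝ) × (Fin m → ℝ) × (Fin m → ℝ) × (Fin l → ℝ))
    (hNewton : F' d = -F u)
    (hPert : ∀ j : Fin m, u.2.2.1 j * d.2.1 j + u.2.1 j * d.2.2.1 j
      = -(u.2.2.1 j * u.2.1 j) + σ * ((∑ i, u.2.1 i * u.2.2.1 i) / m))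
    (hne : F u ≠ 0 ∨ 0 < ∑ i, u.2.1 i * u.2.2.1 i) :
    ∃ φ' : ((Fin n → ℝ) × (Fin m → ℝ) × (Fin m → ℝ) × (Fin l → ℝ)) →L[ℝ] ℝ,
      HasFDerivAt (fun v => ‖F v‖ ^ 2 + ∑ i, v.2.1 i * v.2.2.1 i) φ' u ∧
      φ' d < 0 := by
  classical
  let A := ((Fin n → ℝ) × (Fin m → ℝ) × (Fin m → ℝ) × (Fin l → ℝ))
  -- coordinate projections
  let Y : Fin m → (A →L[ℝ] ℝ) := fun i =>
    (ContinuousLinearMap.proj i).comp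
      ((ContinuousLinearMap.fst ℝ (Fin m → ℝ) ((Fin m → ℝ) × (Fin l → ℝ))).comp
        (ContinuousLinearMap.snd ℝ (Fin n → ℝ)
          ((Fin m → ℝ) × (Fin m → ℝ) × (Fin l → ℝ))))
  let W : Fin m → (A →L[ℝ] ℝ) := fun i =>
    (ContinuousLinearMap.proj i).comp
      ((ContinuousLinearMap.fst ℝ (Fin m → ℝ) (Fin l → ℝ)).comp
        ((ContinuousLinearMap.snd ℝ (Fin m → ℝ) ((Fin m → ℝ) × (Fin l → ℝ))).comp
          (ContinuousLinearMap.snd ℝ (Fin n → ℝ)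
            ((Fin m → ℝ) × (Fin m → ℝ) × (Fin l → ℝ)))))
  have hY : ∀ i, HasFDerivAt (fun v : A => v.2.1 i) (Y i) u := fun i =>
    (Y i).hasFDerivAt
  have hW : ∀ i, HasFDerivAt (fun v : A => v.2.2.1 i) (W i) u := fun i =>
    (W i).hasFDerivAt
  -- derivative of the inner-product part
  have hι : HasFDerivAt (fun v : A => (inner ℝ (F v) (F v) : ℝ))
      ((fderivInnerCLM ℝ (F u, F u)).comp (F'.prod F')) u := hF.inner ℝ hF
  have hnormsq : HasFDerivAt (fun v : A => ‖F v‖ ^ 2)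
      ((fderivInnerCLM ℝ (F u, F u)).comp (F'.prod F')) u := by
    have : (fun v : A => ‖F v‖ ^ 2) = fun v : A => (inner ℝ (F v) (F v) : ℝ) := by
      funext v; rw [real_inner_self_eq_norm_sq]
    rw [this]; exact hι
  -- derivative of the bilinear sum part
  have hsum : HasFDerivAt (fun v : A => ∑ i, v.2.1 i * v.2.2.1 i)
      (∑ i, (u.2.1 i • W i + u.2.2.1 i • Y i)) u := by
    apply HasFDerivAt.fun_sum
    intro i _
    exact (hY i).mul (hW i)
  refine ⟨_, hnormsq.add hsum, ?_⟩
  have happ : ((fderivInnerCLM ℝ (F u, F u)).comp (F'.prod F') +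
      ∑ i, (u.2.1 i • W i + u.2.2.1 i • Y i)) d
      = (-2 : ℝ) * ‖F u‖ ^ 2 + ∑ j, (u.2.2.1 j * d.2.1 j + u.2.1 j * d.2.2.1 j) := by
    simp only [ContinuousLinearMap.add_apply, ContinuousLinearMap.comp_apply,
      ContinuousLinearMap.prod_apply, fderivInnerCLM_apply, hNewton,
      ContinuousLinearMap.sum_apply, ContinuousLinearMap.smul_apply,
      ContinuousLinearMap.coe_smul', Pi.smul_apply]
    have h1 : (inner ℝ (F u) (-F u) : ℝ) + (inner ℝ (-F u) (F u) : ℝ)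
        = (-2 : ℝ) * ‖F u‖ ^ 2 := by
      rw [inner_neg_right, inner_neg_left, real_inner_self_eq_norm_sq]; ring
    rw [h1]
    congr 1
    apply Finset.sum_congr rfl
    intro j _
    simp only [Y, W, ContinuousLinearMap.comp_apply, ContinuousLinearMap.proj_apply,
      ContinuousLinearMap.coe_fst', ContinuousLinearMap.coe_snd',
      ContinuousLinearMap.smul_apply, smul_eq_mul]
    ring
  rw [happ]
  set S : ℝ := ∑ i, u.2.1 i * u.2.2.1 i with hS
  have hSnn : 0 ≤ S := Finset.sum_nonneg fun i _ => mul_nonneg (hy i) (hw i)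
  have hsum2 : ∑ j, (u.2.2.1 j * d.2.1 j + u.2.1 j * d.2.2.1 j) = (σ - 1) * S := by
    rcases Nat.eq_zero_or_pos m with hm | hm
    · subst hm
      simp [hS]
    · have hm' : (m : ℝ) ≠ 0 := Nat.cast_ne_zero.mpr hm.ne'
      calc ∑ j, (u.2.2.1 j * d.2.1 j + u.2.1 j * d.2.2.1 j)
          = ∑ j : Fin m, (-(u.2.2.1 j * u.2.1 j) + σ * (S / m)) := by
            exact Finset.sum_congr rfl fun j _ => hPert j
        _ = -S + m * (σ * (S / m)) := by
            rw [Finset.sum_add_distrib, Finset.sum_neg_distrib, Finset.sum_const,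
              Finset.card_univ, Fintype.card_fin, nsmul_eq_mul]
            congr 1
            rw [hS, neg_inj]
            exact Finset.sum_congr rfl fun j _ => mul_comm _ _
        _ = (σ - 1) * S := by field_simp; ring
  rw [hsum2]
  have hFnn : 0 ≤ ‖F u‖ ^ 2 := sq_nonneg _
  have hσS : (σ - 1) * S ≤ 0 :=
    mul_nonpos_of_nonpos_of_nonneg (by linarith) hSnn
  rcases hne with h | h
  · have : 0 < ‖F u‖ ^ 2 := by
      have := norm_pos_iff.mpr h
      positivity
    nlinarith
  · have : (σ - 1) * S < 0 :=
      mul_neg_of_neg_of_pos (by linarith) (hS ▸ h)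
    nlinarith
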